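/- Let φ, ψ be dual frames for H such that for some I ⊂ ℕ the subfamilies {φ_n : n ∈ I}, {ψ_n : n ∈ I} are Riesz bases for H with lower frame bounds A_{φ,1}, A_{ψ,1}, and let B_{φ,2}, B_{ψ,2} be Bessel bounds of {φ_n : n ∉ I}, {ψ_n : n ∉ I}. Let m ∈ ℓ^∞ and λ ∈ ℂ. If (sup_{n∉I} |m_n − λ|) · B_{φ,2}^{1/2} B_{ψ,2}^{1/2} < (inf_{n∈I} |m_n − λ|) · A_{φ,1}^{1/2} A_{ψ,1}^{1/2}, then λ lies in the resolvent set of M_{m,φ,ψ}. -/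

import Mathlib

open scoped InnerProductSpace ENNReal NNReal

/-- `φ` is a Riesz basis with bounds `A ≤ B`: it is complete and the ℓ²-synthesis
inequalities hold. -/
def IsRieszBasisWith {H : Type*} [NormedAddCommGroup H] [InnerProductSpace ℂ H]
    {ι : Type*} (φ : ι → H) (A B : ℝ) : Prop :=
  (Submodule.span ℂ (Set.range φ)).topologicalClosure = ⊤ ∧
  ∀ c : ι → ℂ, Summable (fun n => ‖c n‖ ^ 2) →
    ∃ s : H, HasSum (fun n => c n • φ n) s ∧
      A * ∑' n, ‖c n‖ ^ 2 ≤ ‖s‖ ^ 2 ∧ ‖s‖ ^ 2 ≤ B * ∑' n, ‖c n‖ ^ 2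

/-- `φ` is a Bessel sequence with Bessel bound `B`. -/
def IsBesselWith {H : Type*} [NormedAddCommGroup H] [InnerProductSpace ℂ H]
    {ι : Type*} (φ : ι → H) (B : ℝ) : Prop :=
  ∀ f : H, ∃ s : ℝ, HasSum (fun n => ‖⟪φ n, f⟫_ℂ‖ ^ 2) s ∧ s ≤ B * ‖f‖ ^ 2

/-- `φ` is a frame with bounds `A, B`. -/
def IsFrameWith {H : Type*} [NormedAddCommGroup H] [InnerProductSpace ℂ H]
    {ι : Type*} (φ : ι → H) (A B : ℝ) : Prop :=
  ∀ f : H, ∃ s : ℝ, HasSum (fun n => ‖⟪φ n, f⟫_ℂ‖ ^ 2) s ∧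
    A * ‖f‖ ^ 2 ≤ s ∧ s ≤ B * ‖f‖ ^ 2

noncomputable section FrameAux

open ContinuousLinearMap

variable {H : Type*} [NormedAddCommGroup H] [InnerProductSpace ℂ H] [CompleteSpace H]
variable {ι : Type*}

/-- The relevant ℓ² space. -/
abbrev El2 (ι : Type*) := lp (fun _ : ι => ℂ) 2

lemma sq_le_helper {a b : ℝ} (ha : 0 ≤ a) (hb : 0 ≤ b) (h : a ^ 2 ≤ b ^ 2) : a ≤ b := by
  nlinarith

lemma el2_hasSum_norm_sq (c : El2 ι) : HasSum (fun n => ‖c n‖ ^ 2) (‖c‖ ^ 2) := by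
  have h := lp.hasSum_norm (p := 2) (by norm_num) c
  have h2 : ((2 : ℝ≥0∞)).toReal = (2 : ℝ) := by norm_num
  simp only [h2] at h
  convert h using 2 with n
  · rw [← Real.rpow_natCast ‖c n‖ 2]; norm_num
  · rw [← Real.rpow_natCast ‖c‖ 2]; norm_num

lemma el2_summable_norm_sq (c : El2 ι) : Summable (fun n => ‖c n‖ ^ 2) :=
  (el2_hasSum_norm_sq c).summable

lemma el2_norm_sq_eq (c : El2 ι) : ‖c‖ ^ 2 = ∑' n, ‖c n‖ ^ 2 :=
  (el2_hasSum_norm_sq c).tsum_eq.symm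

lemma memEl2_of_summable {f : ι → ℂ} (h : Summable (fun n => ‖f n‖ ^ 2)) :
    Memℓp f 2 := by
  apply memℓp_gen
  have h2 : ((2 : ℝ≥0∞)).toReal = (2 : ℝ) := by norm_num
  rw [h2]
  convert h using 2 with n
  rw [← Real.rpow_natCast ‖f n‖ 2]; norm_num

variable {φ : ι → H} {B : ℝ}

lemma besselMem (h : IsBesselWith φ B) (f : H) :
    Memℓp (fun n => ⟪φ n, f⟫_ℂ) 2 :=
  memEl2_of_summable (h f).choose_spec.1.summable

/-- The analysis vector. -/
def besselVec (h : IsBesselWith φ B) (f : H) : El2 ι :=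
  ⟨fun n => ⟪φ n, f⟫_ℂ, besselMem h f⟩

@[simp] lemma besselVec_apply (h : IsBesselWith φ B) (f : H) (n : ι) :
    besselVec h f n = ⟪φ n, f⟫_ℂ := rfl

lemma besselVec_norm_le (h : IsBesselWith φ B) (f : H) :
    ‖besselVec h f‖ ≤ Real.sqrt B * ‖f‖ := by
  obtain ⟨s, hs, hsB⟩ := h f
  have hx2 : ‖besselVec h f‖ ^ 2 = s := by
    refine (el2_hasSum_norm_sq (besselVec h f)).unique ?_
    simpa only [besselVec_apply] using hs
  have hb : ‖besselVec h f‖ ^ 2 ≤ B * ‖f‖ ^ 2 := by rw [hx2]; exact hsB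
  rcases le_or_gt 0 B with hB | hB
  · apply sq_le_helper (norm_nonneg _) (by positivity)
    calc ‖besselVec h f‖ ^ 2 ≤ B * ‖f‖ ^ 2 := hb
      _ = (Real.sqrt B * ‖f‖) ^ 2 := by rw [mul_pow, Real.sq_sqrt hB]
  · have h0 : ‖besselVec h f‖ ^ 2 ≤ 0 := le_trans hb (by nlinarith [sq_nonneg ‖f‖])
    have hxz : ‖besselVec h f‖ = 0 := by nlinarith [norm_nonneg (besselVec h f)]
    rw [hxz]; positivity

/-- The analysis operator of a Bessel sequence. -/
def besselAnalysis (h : IsBesselWith φ B) : H →L[ℂ] El2 ι :=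
  LinearMap.mkContinuous
    { toFun := besselVec h
      map_add' := fun f g => by
        apply lp.ext; funext n
        simp only [besselVec_apply, lp.coeFn_add, Pi.add_apply, besselVec]
        exact inner_add_right _ _ _
      map_smul' := fun c f => by
        apply lp.ext; funext n
        simp only [besselVec_apply, lp.coeFn_smul, Pi.smul_apply, besselVec, RingHom.id_apply]
        rw [inner_smul_right]
        rfl }
    (Real.sqrt B)
    (fun f => besselVec_norm_le h f)

@[simp] lemma besselAnalysis_apply (h : IsBesselWith φ B) (f : H) (n : ι) :
    (besselAnalysis h f) n = ⟪φ n, f⟫_ℂ := rfl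

lemma besselAnalysis_norm_le (h : IsBesselWith φ B) :
    ‖besselAnalysis h‖ ≤ Real.sqrt B :=
  LinearMap.mkContinuous_norm_le _ (Real.sqrt_nonneg B) _

/-- The synthesis operator of a Bessel sequence, as the adjoint of the analysis operator. -/
def besselSynth (h : IsBesselWith φ B) : El2 ι →L[ℂ] H :=
  ContinuousLinearMap.adjoint (besselAnalysis h)

lemma besselSynth_norm_le (h : IsBesselWith φ B) :
    ‖besselSynth h‖ ≤ Real.sqrt B := by
  rw [besselSynth, LinearIsometryEquiv.norm_map]
  exact besselAnalysis_norm_le h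

lemma besselSynth_single [DecidableEq ι] (h : IsBesselWith φ B) (n : ι) (z : ℂ) :
    besselSynth h (lp.single 2 n z) = z • φ n := by
  apply ext_inner_left ℂ
  intro f
  rw [besselSynth, ContinuousLinearMap.adjoint_inner_right, lp.inner_single_right,
    besselAnalysis_apply, inner_smul_right, RCLike.inner_apply, inner_conj_symm]

lemma besselSynth_hasSum (h : IsBesselWith φ B) (c : El2 ι) :
    HasSum (fun n => c n • φ n) (besselSynth h c) := by
  classical
  have h1 : HasSum (fun n => lp.single 2 n (c n)) c :=
    lp.hasSum_single (by norm_num) c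
  have h2 := h1.mapL (besselSynth h)
  simpa only [besselSynth_single] using h2

section Riesz

variable {A : ℝ}

/-- The synthesis operator of a Riesz sequence. -/
def rieszSynth (hR : IsRieszBasisWith φ A B) : El2 ι →L[ℂ] H :=
  LinearMap.mkContinuous
    { toFun := fun c => ∑' n, c n • φ n
      map_add' := fun c d => by
        dsimp only
        obtain ⟨s, hs, _⟩ := hR.2 c (el2_summable_norm_sq c)
        obtain ⟨t, ht, _⟩ := hR.2 d (el2_summable_norm_sq d)
        have hst : HasSum (fun n => (c + d) n • φ n) (s + t) := by
          have := hs.add ht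
          convert this using 2 with n
          simp [add_smul]
        rw [hst.tsum_eq, hs.tsum_eq, ht.tsum_eq]
      map_smul' := fun a c => by
        dsimp only
        obtain ⟨s, hs, _⟩ := hR.2 c (el2_summable_norm_sq c)
        have hsc : HasSum (fun n => (a • c) n • φ n) (a • s) := by
          have := hs.const_smul a
          convert this using 2 with n
          simp [smul_smul]
        rw [hsc.tsum_eq, hs.tsum_eq]
        rfl }
    (Real.sqrt B)
    (by
      intro c
      obtain ⟨s, hs, h1, h2⟩ := hR.2 c (el2_summable_norm_sq c)
      show ‖∑' n, c n • φ n‖ ≤ Real.sqrt B * ‖c‖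
      rw [hs.tsum_eq]
      have hc2 : ∑' n, ‖c n‖ ^ 2 = ‖c‖ ^ 2 := (el2_norm_sq_eq c).symm
      rw [hc2] at h2
      rcases le_or_gt 0 B with hB | hB
      · apply sq_le_helper (norm_nonneg _) (by positivity)
        calc ‖s‖ ^ 2 ≤ B * ‖c‖ ^ 2 := h2
          _ = (Real.sqrt B * ‖c‖) ^ 2 := by rw [mul_pow, Real.sq_sqrt hB]
      · have : ‖s‖ ^ 2 ≤ 0 := le_trans h2 (by nlinarith [sq_nonneg ‖c‖])
        have hsz : ‖s‖ = 0 := by nlinarith [norm_nonneg s]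
        rw [hsz]; positivity)

lemma rieszSynth_hasSum (hR : IsRieszBasisWith φ A B) (c : El2 ι) :
    HasSum (fun n => c n • φ n) (rieszSynth hR c) := by
  obtain ⟨s, hs, _⟩ := hR.2 c (el2_summable_norm_sq c)
  have : rieszSynth hR c = s := hs.tsum_eq
  rw [this]; exact hs

lemma rieszSynth_lower (hR : IsRieszBasisWith φ A B) (c : El2 ι) :
    A * ‖c‖ ^ 2 ≤ ‖rieszSynth hR c‖ ^ 2 := by
  obtain ⟨s, hs, h1, _⟩ := hR.2 c (el2_summable_norm_sq c)
  have : rieszSynth hR c = s := ((rieszSynth_hasSum hR c)).unique hs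
  rw [this, el2_norm_sq_eq c]
  exact h1

lemma rieszSynth_norm_lower (hR : IsRieszBasisWith φ A B) (hA : 0 < A) (c : El2 ι) :
    Real.sqrt A * ‖c‖ ≤ ‖rieszSynth hR c‖ := by
  apply sq_le_helper (by positivity) (norm_nonneg _)
  rw [mul_pow, Real.sq_sqrt hA.le]
  exact rieszSynth_lower hR c

lemma rieszSynth_single [DecidableEq ι] (hR : IsRieszBasisWith φ A B) (n : ι) :
    rieszSynth hR (lp.single 2 n (1 : ℂ)) = φ n := by
  classical
  have h := rieszSynth_hasSum hR (lp.single 2 n (1 : ℂ))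
  have h2 : HasSum (fun k => (lp.single 2 n (1 : ℂ) : El2 ι) k • φ k) (φ n) := by
    have : (fun k => (lp.single 2 n (1 : ℂ) : El2 ι) k • φ k)
        = fun k => if k = n then φ n else 0 := by
      funext k
      by_cases hk : k = n
      · subst hk; simp [lp.single_apply_self]
      · simp [lp.single_apply_ne 2 n _ hk, hk]
    rw [this]
    exact hasSum_ite_eq n (φ n)
  exact h.unique h2

lemma rieszSynth_injective (hR : IsRieszBasisWith φ A B) (hA : 0 < A) :
    LinearMap.ker (rieszSynth hR : El2 ι →ₗ[ℂ] H) = ⊥ := by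
  apply LinearMap.ker_eq_bot_of_injective
  intro c d hcd
  replace hcd : rieszSynth hR c = rieszSynth hR d := hcd
  have h1 := rieszSynth_norm_lower hR hA (c - d)
  rw [map_sub, hcd, sub_self, norm_zero] at h1
  have : ‖c - d‖ ≤ 0 := by
    have hs : 0 < Real.sqrt A := Real.sqrt_pos.mpr hA
    nlinarith [norm_nonneg (c - d)]
  exact sub_eq_zero.mp (norm_le_zero_iff.mp this)

lemma rieszSynth_surjective (hR : IsRieszBasisWith φ A B) (hA : 0 < A) :
    LinearMap.range (rieszSynth hR : El2 ι →ₗ[ℂ] H) = ⊤ := by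
  classical
  have hanti : AntilipschitzWith (Real.sqrt A)⁻¹.toNNReal (rieszSynth hR) := by
    apply ContinuousLinearMap.antilipschitz_of_bound
    intro c
    have h := rieszSynth_norm_lower hR hA c
    have hs : 0 < Real.sqrt A := Real.sqrt_pos.mpr hA
    rw [Real.coe_toNNReal _ (by positivity)]
    rw [inv_mul_eq_div, le_div_iff₀ hs]
    linarith
  have hclosed : IsClosed (Set.range (rieszSynth hR)) :=
    hanti.isClosed_range (rieszSynth hR).uniformContinuous
  have hrange : Set.range φ ⊆ Set.range (rieszSynth hR) := by
    rintro x ⟨n, rfl⟩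
    exact ⟨lp.single 2 n 1, rieszSynth_single hR n⟩
  have hspan : Submodule.span ℂ (Set.range φ) ≤ LinearMap.range (rieszSynth hR : El2 ι →ₗ[ℂ] H) := by
    rw [Submodule.span_le]
    intro x hx
    exact hrange hx
  have htop := hR.1
  rw [← top_le_iff]
  calc (⊤ : Submodule ℂ H) = (Submodule.span ℂ (Set.range φ)).topologicalClosure := htop.symm
    _ ≤ (LinearMap.range (rieszSynth hR : El2 ι →ₗ[ℂ] H)).topologicalClosure :=
        Submodule.topologicalClosure_mono hspan
    _ = LinearMap.range (rieszSynth hR : El2 ι →ₗ[ℂ] H) := by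
        apply IsClosed.submodule_topologicalClosure_eq
        exact hclosed

/-- The Riesz synthesis operator as a continuous linear equivalence. -/
def rieszEquiv (hR : IsRieszBasisWith φ A B) (hA : 0 < A) : El2 ι ≃L[ℂ] H :=
  ContinuousLinearEquiv.ofBijective (rieszSynth hR) (rieszSynth_injective hR hA)
    (rieszSynth_surjective hR hA)

lemma rieszEquiv_apply (hR : IsRieszBasisWith φ A B) (hA : 0 < A) (c : El2 ι) :
    rieszEquiv hR hA c = rieszSynth hR c := rfl

lemma rieszEquiv_symm_norm_le (hR : IsRieszBasisWith φ A B) (hA : 0 < A) (y : H) :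
    ‖(rieszEquiv hR hA).symm y‖ ≤ (Real.sqrt A)⁻¹ * ‖y‖ := by
  have hs : 0 < Real.sqrt A := Real.sqrt_pos.mpr hA
  have h := rieszSynth_norm_lower hR hA ((rieszEquiv hR hA).symm y)
  have h2 : rieszSynth hR ((rieszEquiv hR hA).symm y) = y := by
    have := (rieszEquiv hR hA).apply_symm_apply y
    rw [← rieszEquiv_apply hR hA]
    exact this
  rw [h2] at h
  rw [inv_mul_eq_div, le_div_iff₀ hs]
  linarith

end Riesz

/-- Diagonal multiplication operator on ℓ². -/
def diagOp (w : ι → ℂ) (W : ℝ) (hW0 : 0 ≤ W) (hW : ∀ n, ‖w n‖ ≤ W) : El2 ι →L[ℂ] El2 ι :=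
  LinearMap.mkContinuous
    { toFun := fun c => ⟨fun n => w n * c n, by
        apply memEl2_of_summable
        apply Summable.of_nonneg_of_le (fun n => by positivity)
          (fun n => ?_) ((el2_summable_norm_sq c).mul_left (W ^ 2))
        rw [norm_mul, mul_pow]
        gcongr
        exact hW n⟩
      map_add' := fun c d => by
        apply lp.ext; funext n
        show w n * (c + d) n = w n * c n + w n * d n
        rw [lp.coeFn_add]; simp [mul_add]
      map_smul' := fun a c => by
        apply lp.ext; funext n
        show w n * (a • c) n = a * (w n * c n)
        rw [lp.coeFn_smul]; simp; ring }
    W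
    (by
      intro c
      set x : El2 ι := ⟨fun n => w n * c n, _⟩
      show ‖x‖ ≤ W * ‖c‖
      apply sq_le_helper (norm_nonneg _) (by positivity)
      rw [el2_norm_sq_eq x, mul_pow, el2_norm_sq_eq c, ← tsum_mul_left]
      apply Summable.tsum_le_tsum _ (el2_summable_norm_sq x)
        ((el2_summable_norm_sq c).mul_left (W ^ 2))
      intro n
      show ‖w n * c n‖ ^ 2 ≤ W ^ 2 * ‖c n‖ ^ 2
      rw [norm_mul, mul_pow]
      gcongr
      exact hW n)

@[simp] lemma diagOp_apply (w : ι → ℂ) (W : ℝ) (hW0 : 0 ≤ W) (hW : ∀ n, ‖w n‖ ≤ W)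
    (c : El2 ι) (n : ι) : (diagOp w W hW0 hW c) n = w n * c n := rfl

lemma diagOp_norm_le (w : ι → ℂ) (W : ℝ) (hW0 : 0 ≤ W) (hW : ∀ n, ‖w n‖ ≤ W) :
    ‖diagOp w W hW0 hW‖ ≤ W :=
  LinearMap.mkContinuous_norm_le _ hW0 _

end FrameAux

set_option maxHeartbeats 1000000 in
/-- for dual frames `φ, ψ` containing Riesz bases indexed by `I`, if
`(sup_{n∉I}|m n − λ|)·Bφ2^(1/2)·Bψ2^(1/2) < (inf_{n∈I}|m n − λ|)·Aφ1^(1/2)·Aψ1^(1/2)`,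
then `λ` is in the resolvent set of `M_{m,φ,ψ}`. -/
theorem resolvent_dual_frames_multiplier_of_riesz_part
    {H : Type*} [NormedAddCommGroup H] [InnerProductSpace ℂ H] [CompleteSpace H]
    (φ ψ : ℕ → H)
    (hφframe : ∃ A B : ℝ, 0 < A ∧ IsFrameWith φ A B)
    (hψframe : ∃ A B : ℝ, 0 < A ∧ IsFrameWith ψ A B)
    (hdual : ∀ f : H, HasSum (fun n => ⟪ψ n, f⟫_ℂ • φ n) f)
    (I : Set ℕ)
    (Aφ1 Aψ1 Bφ2 Bψ2 : ℝ) (hAφ1 : 0 < Aφ1) (hAψ1 : 0 < Aψ1)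
    (hφ1 : ∃ B1 : ℝ, IsRieszBasisWith (fun n : I => φ n) Aφ1 B1)
    (hψ1 : ∃ B1 : ℝ, IsRieszBasisWith (fun n : I => ψ n) Aψ1 B1)
    (hφ2 : IsBesselWith (fun n : {n : ℕ // n ∉ I} => φ n) Bφ2)
    (hψ2 : IsBesselWith (fun n : {n : ℕ // n ∉ I} => ψ n) Bψ2)
    (m : ℕ → ℂ) (hm : ∃ C : ℝ, ∀ n, ‖m n‖ ≤ C)
    (M : H →L[ℂ] H)
    (hM : ∀ f : H, HasSum (fun n => (m n * ⟪ψ n, f⟫_ℂ) • φ n) (M f))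
    (lam : ℂ)
    (hcond : (⨆ n : {n : ℕ // n ∉ I}, ‖m n - lam‖) * Real.sqrt Bφ2 * Real.sqrt Bψ2 <
      (⨅ n : I, ‖m n - lam‖) * Real.sqrt Aφ1 * Real.sqrt Aψ1) :
    lam ∈ resolventSet ℂ M := by
  classical
  obtain ⟨C, hC⟩ := hm
  obtain ⟨Bφ1, hRφ⟩ := hφ1
  obtain ⟨Bψ1, hRψ⟩ := hψ1
  -- notations
  set s : ℝ := ⨆ n : {n : ℕ // n ∉ I}, ‖m n - lam‖ with hs_def
  set d : ℝ := ⨅ n : I, ‖m n - lam‖ with hd_def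
  have hsqAφ : 0 < Real.sqrt Aφ1 := Real.sqrt_pos.mpr hAφ1
  have hsqAψ : 0 < Real.sqrt Aψ1 := Real.sqrt_pos.mpr hAψ1
  have hs_nonneg : 0 ≤ s := Real.iSup_nonneg (fun n => norm_nonneg _)
  have hlhs_nonneg : 0 ≤ s * Real.sqrt Bφ2 * Real.sqrt Bψ2 := by positivity
  have hrhs_pos : 0 < d * Real.sqrt Aφ1 * Real.sqrt Aψ1 :=
    lt_of_le_of_lt hlhs_nonneg hcond
  have hd_pos : 0 < d := by
    by_contra hd
    push_neg at hd
    have hp := mul_pos hsqAφ hsqAψ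
    nlinarith
  -- I is nonempty
  have hI_ne : Nonempty I := by
    by_contra hempty
    rw [not_nonempty_iff] at hempty
    have : d = 0 := by
      rw [hd_def, iInf_of_isEmpty]
      exact Real.sInf_empty
    rw [this] at hd_pos
    exact lt_irrefl 0 hd_pos
  have hd_le : ∀ n : I, d ≤ ‖m n - lam‖ := by
    intro n
    exact ciInf_le ⟨0, by rintro x ⟨k, rfl⟩; exact norm_nonneg _⟩ n
  have hs_le : ∀ n : {n : ℕ // n ∉ I}, ‖m n - lam‖ ≤ s := by
    intro n
    apply le_ciSup (f := fun n : {n : ℕ // n ∉ I} => ‖m n - lam‖)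
    refine ⟨C + ‖lam‖, ?_⟩
    rintro x ⟨k, rfl⟩
    calc ‖m k - lam‖ ≤ ‖m k‖ + ‖lam‖ := norm_sub_le _ _
      _ ≤ C + ‖lam‖ := by gcongr; exact hC k
  -- bound on the symbol
  have hCl : 0 ≤ C + ‖lam‖ := le_trans (norm_nonneg (m 0 - lam)) (by
    calc ‖m 0 - lam‖ ≤ ‖m 0‖ + ‖lam‖ := norm_sub_le _ _
      _ ≤ C + ‖lam‖ := by gcongr; exact hC 0)
  have hwbound : ∀ n : ℕ, ‖m n - lam‖ ≤ C + ‖lam‖ := fun n => by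
    calc ‖m n - lam‖ ≤ ‖m n‖ + ‖lam‖ := norm_sub_le _ _
      _ ≤ C + ‖lam‖ := by gcongr; exact hC n
  -- operators
  set Tφ := rieszEquiv hRφ hAφ1 with hTφ_def
  set Tψ := rieszEquiv hRψ hAψ1 with hTψ_def
  set Dw : El2 I →L[ℂ] El2 I :=
    diagOp (fun n : I => m n - lam) (C + ‖lam‖) hCl (fun n => hwbound n) with hDw_def
  set Dv : El2 I →L[ℂ] El2 I :=
    diagOp (fun n : I => (m n - lam)⁻¹) d⁻¹ (by positivity)
      (fun n => by
        rw [norm_inv]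
        exact inv_anti₀ hd_pos (hd_le n)) with hDv_def
  set Dw2 : El2 {n : ℕ // n ∉ I} →L[ℂ] El2 {n : ℕ // n ∉ I} :=
    diagOp (fun n : {n : ℕ // n ∉ I} => m n - lam) s hs_nonneg hs_le with hDw2_def
  set M1 : H →L[ℂ] H :=
    ((Tφ : El2 I →L[ℂ] H).comp Dw).comp
      (ContinuousLinearMap.adjoint (Tψ : El2 I →L[ℂ] H)) with hM1_def
  set N : H →L[ℂ] H :=
    ((ContinuousLinearMap.adjoint ((Tψ.symm : H →L[ℂ] El2 I))).comp Dv).comp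
      (Tφ.symm : H →L[ℂ] El2 I) with hN_def
  set M2 : H →L[ℂ] H :=
    ((besselSynth hφ2).comp Dw2).comp (besselAnalysis hψ2) with hM2_def
  -- adjoint components
  have hTψadj : ∀ (f : H) (n : I),
      ((ContinuousLinearMap.adjoint (Tψ : El2 I →L[ℂ] H)) f) n = ⟪ψ n, f⟫_ℂ := by
    intro f n
    have h1 : ((ContinuousLinearMap.adjoint (Tψ : El2 I →L[ℂ] H)) f) n
        = ⟪lp.single 2 n (1 : ℂ), (ContinuousLinearMap.adjoint (Tψ : El2 I →L[ℂ] H)) f⟫_ℂ := by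
      rw [lp.inner_single_left]
      simp [RCLike.inner_apply]
    rw [h1, ContinuousLinearMap.adjoint_inner_right]
    have h2 : (Tψ : El2 I →L[ℂ] H) (lp.single 2 n (1 : ℂ)) = ψ n :=
      rieszSynth_single hRψ n
    rw [h2]
  -- M1 HasSum
  have hM1sum : ∀ f : H,
      HasSum (fun n : I => ((m n - lam) * ⟪ψ n, f⟫_ℂ) • φ n) (M1 f) := by
    intro f
    have h := rieszSynth_hasSum hRφ (Dw ((ContinuousLinearMap.adjoint
      (Tψ : El2 I →L[ℂ] H)) f))
    have heq : ∀ n : I, (Dw ((ContinuousLinearMap.adjoint (Tψ : El2 I →L[ℂ] H)) f)) n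
        = (m n - lam) * ⟪ψ n, f⟫_ℂ := by
      intro n
      rw [hDw_def, diagOp_apply, hTψadj f n]
    have : M1 f = rieszSynth hRφ (Dw ((ContinuousLinearMap.adjoint
        (Tψ : El2 I →L[ℂ] H)) f)) := rfl
    rw [this]
    convert h using 2 with n
    rw [heq n]
  -- M2 HasSum
  have hM2sum : ∀ f : H,
      HasSum (fun n : {n : ℕ // n ∉ I} => ((m n - lam) * ⟪ψ n, f⟫_ℂ) • φ n) (M2 f) := by
    intro f
    have h := besselSynth_hasSum hφ2 (Dw2 (besselAnalysis hψ2 f))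
    have : M2 f = besselSynth hφ2 (Dw2 (besselAnalysis hψ2 f)) := rfl
    rw [this]
    exact h
  -- M - lam = M1 + M2
  have hsplit : M - lam • (1 : H →L[ℂ] H) = M1 + M2 := by
    ext f
    have hg : HasSum (fun n : ℕ => ((m n - lam) * ⟪ψ n, f⟫_ℂ) • φ n) (M f - lam • f) := by
      have h1 := hM f
      have h2 := (hdual f).const_smul lam
      have h2' : HasSum (fun n => (lam * ⟪ψ n, f⟫_ℂ) • φ n) (lam • f) := by
        convert h2 using 2 with n
        rw [smul_smul]
      have := h1.sub h2'
      convert this using 2 with n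
      rw [← sub_smul]
      ring_nf
    have h1 : HasSum ((fun n : ℕ => ((m n - lam) * ⟪ψ n, f⟫_ℂ) • φ n) ∘ ((↑) : I → ℕ))
        (M1 f) := hM1sum f
    have h2 : HasSum ((fun n : ℕ => ((m n - lam) * ⟪ψ n, f⟫_ℂ) • φ n) ∘
        ((↑) : (Iᶜ : Set ℕ) → ℕ)) (M2 f) := hM2sum f
    have h3 := h1.add_compl h2
    have := hg.unique h3
    simp only [ContinuousLinearMap.sub_apply, ContinuousLinearMap.smul_apply,
      ContinuousLinearMap.one_apply, ContinuousLinearMap.add_apply]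
    exact this
  -- M1 is invertible with inverse N
  have hTψ_comp : (Tψ.symm : H →L[ℂ] El2 I).comp (Tψ : El2 I →L[ℂ] H)
      = ContinuousLinearMap.id ℂ (El2 I) := by
    refine ContinuousLinearMap.ext fun c => ?_
    exact Tψ.symm_apply_apply c
  have hTψ_comp' : (Tψ : El2 I →L[ℂ] H).comp (Tψ.symm : H →L[ℂ] El2 I)
      = ContinuousLinearMap.id ℂ H := by
    ext f
    exact Tψ.apply_symm_apply f
  have hTφ_comp : (Tφ : El2 I →L[ℂ] H).comp (Tφ.symm : H →L[ℂ] El2 I)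
      = ContinuousLinearMap.id ℂ H := by
    ext f
    exact Tφ.apply_symm_apply f
  have hTφ_comp' : (Tφ.symm : H →L[ℂ] El2 I).comp (Tφ : El2 I →L[ℂ] H)
      = ContinuousLinearMap.id ℂ (El2 I) := by
    refine ContinuousLinearMap.ext fun c => ?_
    exact Tφ.symm_apply_apply c
  have hmne : ∀ n : I, (m n - lam) ≠ 0 := by
    intro n
    intro hzero
    have := hd_le n
    rw [hzero, norm_zero] at this
    linarith
  have hDwv : Dw.comp Dv = ContinuousLinearMap.id ℂ (El2 I) := by
    refine ContinuousLinearMap.ext fun c => ?_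
    apply lp.ext; funext n
    show (m n - lam) * ((m n - lam)⁻¹ * c n) = c n
    rw [← mul_assoc, mul_inv_cancel₀ (hmne n), one_mul]
  have hDvw : Dv.comp Dw = ContinuousLinearMap.id ℂ (El2 I) := by
    refine ContinuousLinearMap.ext fun c => ?_
    apply lp.ext; funext n
    show (m n - lam)⁻¹ * ((m n - lam) * c n) = c n
    rw [← mul_assoc, inv_mul_cancel₀ (hmne n), one_mul]
  have hadj_comp : (ContinuousLinearMap.adjoint (Tψ : El2 I →L[ℂ] H)).comp
      (ContinuousLinearMap.adjoint (Tψ.symm : H →L[ℂ] El2 I))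
      = ContinuousLinearMap.id ℂ (El2 I) := by
    rw [← ContinuousLinearMap.adjoint_comp]
    rw [hTψ_comp]
    exact ContinuousLinearMap.adjoint_id
  have hadj_comp' : (ContinuousLinearMap.adjoint (Tψ.symm : H →L[ℂ] El2 I)).comp
      (ContinuousLinearMap.adjoint (Tψ : El2 I →L[ℂ] H))
      = ContinuousLinearMap.id ℂ H := by
    rw [← ContinuousLinearMap.adjoint_comp]
    rw [hTψ_comp']
    exact ContinuousLinearMap.adjoint_id
  have hDwv' : ∀ x, Dw (Dv x) = x := fun x => by
    have := DFunLike.congr_fun hDwv x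
    simpa using this
  have hDvw' : ∀ x, Dv (Dw x) = x := fun x => by
    have := DFunLike.congr_fun hDvw x
    simpa using this
  have hadj' : ∀ x, (ContinuousLinearMap.adjoint (Tψ : El2 I →L[ℂ] H))
      ((ContinuousLinearMap.adjoint (Tψ.symm : H →L[ℂ] El2 I)) x) = x := fun x => by
    have := DFunLike.congr_fun hadj_comp x
    simpa using this
  have hadj'' : ∀ x, (ContinuousLinearMap.adjoint (Tψ.symm : H →L[ℂ] El2 I))
      ((ContinuousLinearMap.adjoint (Tψ : El2 I →L[ℂ] H)) x) = x := fun x => by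
    have := DFunLike.congr_fun hadj_comp' x
    simpa using this
  have hM1N : M1 * N = 1 := by
    refine ContinuousLinearMap.ext fun f => ?_
    rw [ContinuousLinearMap.mul_apply, ContinuousLinearMap.one_apply, hM1_def, hN_def]
    simp only [ContinuousLinearMap.comp_apply]
    rw [hadj' _, hDwv' _]
    exact Tφ.apply_symm_apply f
  have hNM1 : N * M1 = 1 := by
    refine ContinuousLinearMap.ext fun f => ?_
    rw [ContinuousLinearMap.mul_apply, ContinuousLinearMap.one_apply, hM1_def, hN_def]
    simp only [ContinuousLinearMap.comp_apply]
    have hTφ' : (Tφ.symm : H →L[ℂ] El2 I) ((Tφ : El2 I →L[ℂ] H)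
        (Dw ((ContinuousLinearMap.adjoint (Tψ : El2 I →L[ℂ] H)) f)))
        = Dw ((ContinuousLinearMap.adjoint (Tψ : El2 I →L[ℂ] H)) f) :=
      Tφ.symm_apply_apply _
    rw [hTφ', hDvw' _]
    exact hadj'' f
  -- norm bounds
  have hTφsymm_norm : ‖(Tφ.symm : H →L[ℂ] El2 I)‖ ≤ (Real.sqrt Aφ1)⁻¹ := by
    apply ContinuousLinearMap.opNorm_le_bound _ (by positivity)
    intro f
    exact rieszEquiv_symm_norm_le hRφ hAφ1 f
  have hTψsymm_norm : ‖(Tψ.symm : H →L[ℂ] El2 I)‖ ≤ (Real.sqrt Aψ1)⁻¹ := by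
    apply ContinuousLinearMap.opNorm_le_bound _ (by positivity)
    intro f
    exact rieszEquiv_symm_norm_le hRψ hAψ1 f
  have hTψsymm_adj_norm : ‖ContinuousLinearMap.adjoint (Tψ.symm : H →L[ℂ] El2 I)‖
      ≤ (Real.sqrt Aψ1)⁻¹ := by
    rw [LinearIsometryEquiv.norm_map (ContinuousLinearMap.adjoint (𝕜 := ℂ))]
    exact hTψsymm_norm
  have hN_norm : ‖N‖ ≤ (Real.sqrt Aψ1)⁻¹ * d⁻¹ * (Real.sqrt Aφ1)⁻¹ := by
    rw [hN_def]
    calc ‖((ContinuousLinearMap.adjoint ((Tψ.symm : H →L[ℂ] El2 I))).comp Dv).comp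
          (Tφ.symm : H →L[ℂ] El2 I)‖
        ≤ ‖(ContinuousLinearMap.adjoint ((Tψ.symm : H →L[ℂ] El2 I))).comp Dv‖ *
          ‖(Tφ.symm : H →L[ℂ] El2 I)‖ := ContinuousLinearMap.opNorm_comp_le _ _
      _ ≤ (‖ContinuousLinearMap.adjoint ((Tψ.symm : H →L[ℂ] El2 I))‖ * ‖Dv‖) *
          ‖(Tφ.symm : H →L[ℂ] El2 I)‖ := by
          gcongr
          exact ContinuousLinearMap.opNorm_comp_le _ _
      _ ≤ ((Real.sqrt Aψ1)⁻¹ * d⁻¹) * (Real.sqrt Aφ1)⁻¹ := by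
          gcongr <;> first
            | exact hTψsymm_adj_norm
            | exact diagOp_norm_le _ _ _ _
            | exact hTφsymm_norm
            | positivity
  have hM2_norm : ‖M2‖ ≤ Real.sqrt Bφ2 * s * Real.sqrt Bψ2 := by
    rw [hM2_def]
    calc ‖((besselSynth hφ2).comp Dw2).comp (besselAnalysis hψ2)‖
        ≤ ‖(besselSynth hφ2).comp Dw2‖ * ‖besselAnalysis hψ2‖ :=
          ContinuousLinearMap.opNorm_comp_le _ _
      _ ≤ (‖besselSynth hφ2‖ * ‖Dw2‖) * ‖besselAnalysis hψ2‖ := by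
          gcongr
          exact ContinuousLinearMap.opNorm_comp_le _ _
      _ ≤ (Real.sqrt Bφ2 * s) * Real.sqrt Bψ2 := by
          gcongr <;> first
            | exact besselSynth_norm_le hφ2
            | exact diagOp_norm_le _ _ _ _
            | exact besselAnalysis_norm_le hψ2
            | positivity
  -- the smallness condition
  have hsmall : ‖N * M2‖ < 1 := by
    calc ‖N * M2‖ ≤ ‖N‖ * ‖M2‖ := norm_mul_le _ _
      _ ≤ ((Real.sqrt Aψ1)⁻¹ * d⁻¹ * (Real.sqrt Aφ1)⁻¹) * (Real.sqrt Bφ2 * s * Real.sqrt Bψ2) := by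
          gcongr <;> first
            | exact norm_nonneg _
            | exact hN_norm
            | exact hM2_norm
            | positivity
      _ < 1 := by
          rw [show ((Real.sqrt Aψ1)⁻¹ * d⁻¹ * (Real.sqrt Aφ1)⁻¹) *
            (Real.sqrt Bφ2 * s * Real.sqrt Bψ2)
            = (s * Real.sqrt Bφ2 * Real.sqrt Bψ2) / (d * Real.sqrt Aφ1 * Real.sqrt Aψ1) by
              field_simp]
          rw [div_lt_one hrhs_pos]
          exact hcond
  -- conclude
  rw [resolventSet, Set.mem_setOf_eq]
  have halg : algebraMap ℂ (H →L[ℂ] H) lam - M = -(M1 + M2) := by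
    rw [← hsplit]
    have : algebraMap ℂ (H →L[ℂ] H) lam = lam • (1 : H →L[ℂ] H) := by
      rw [Algebra.algebraMap_eq_smul_one]
    rw [this]
    abel
  rw [halg]
  apply IsUnit.neg
  have hu1 : IsUnit M1 := ⟨⟨M1, N, hM1N, hNM1⟩, rfl⟩
  have hu2 : IsUnit ((1 : H →L[ℂ] H) + N * M2) := by
    have h := (Units.oneSub (-(N * M2)) (by rwa [norm_neg])).isUnit
    rw [Units.val_oneSub, sub_neg_eq_add] at h
    exact h
  have hfact : M1 + M2 = M1 * ((1 : H →L[ℂ] H) + N * M2) := by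
    rw [mul_add, mul_one, ← mul_assoc, hM1N, one_mul]
  rw [hfact]
  exact hu1.mul hu2
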